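/- If two norms on a two-dimensional real vector space induce the same Birkhoff normality relation, then they are proportional. -/

import Mathlib

/-- `x` is Birkhoff normal to `y` with respect to the norm-like function `N`. -/
def NormalWith {V : Type*} [AddCommGroup V] [Module ℝ V] (N : V → ℝ) (x y : V) : Prop :=
  ∀ t : ℝ, N x ≤ N (x + t • y)


open Set Filter Topology

/-- Existence of a subderivative for a convex Lipschitz function on ℝ. -/
lemma aux_subderiv (g : ℝ → ℝ) (hcvx : ConvexOn ℝ Set.univ g) (L : ℝ)
    (hlip : ∀ a b : ℝ, g a ≤ g b + |a - b| * L) (s : ℝ) :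
    ∃ d : ℝ, |d| ≤ L ∧ ∀ r : ℝ, g s + d * r ≤ g (s + r) := by
  have hL : 0 ≤ L := by
    have := hlip (s+1) s
    have h2 := hlip s (s+1)
    by_contra hneg
    push_neg at hneg
    simp only [add_sub_cancel_left] at this
    rw [abs_one, one_mul] at this
    have h3 : |s - (s+1)| = 1 := by rw [show s - (s+1) = -1 by ring, abs_neg, abs_one]
    rw [h3, one_mul] at h2
    linarith
  set S : Set ℝ := (fun h : ℝ => (g (s + h) - g s) / h) '' Ioi 0 with hS
  have hne : S.Nonempty := ⟨_, ⟨1, by norm_num, rfl⟩⟩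
  have hslope : ∀ h ∈ Ioi (0:ℝ), (g s - g (s - 1)) / 1 ≤ (g (s + h) - g s) / h := by
    intro h hh
    have := hcvx.slope_mono_adjacent (mem_univ (s-1)) (mem_univ (s+h))
      (show s - 1 < s by linarith) (show s < s + h by simpa using hh)
    simpa [sub_sub_cancel, add_sub_cancel_left] using this
  have hbdd : BddBelow S := by
    refine ⟨(g s - g (s - 1)) / 1, ?_⟩
    rintro y ⟨h, hh, rfl⟩
    exact hslope h hh
  set d := sInf S with hd
  have hdle : ∀ h ∈ Ioi (0:ℝ), d ≤ (g (s + h) - g s) / h := fun h hh =>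
    csInf_le hbdd ⟨h, hh, rfl⟩
  have hdge : (g s - g (s - 1)) / 1 ≤ d := le_csInf hne (by rintro y ⟨h, hh, rfl⟩; exact hslope h hh)
  refine ⟨d, ?_, ?_⟩
  · rw [abs_le]
    constructor
    · have h1 : g (s-1) ≤ g s + 1 * L := by
        have := hlip (s-1) s; simpa [show s - 1 - s = -1 by ring] using this
      have h3 : -L ≤ (g s - g (s - 1)) / 1 := by rw [div_one]; linarith
      linarith [hdge]
    · have h2 : g (s+1) ≤ g s + 1 * L := by
        have := hlip (s+1) s; simpa using this
      have := hdle 1 (by norm_num)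
      rw [div_one] at this
      linarith
  · intro r
    rcases lt_trichotomy r 0 with hr | hr | hr
    · have hsl : (g s - g (s + r)) / (-r) ≤ d := by
        refine le_csInf hne ?_
        rintro y ⟨h, hh, rfl⟩
        have := hcvx.slope_mono_adjacent (mem_univ (s+r)) (mem_univ (s+h))
          (show s + r < s by linarith) (show s < s + h by simpa using hh)
        have e1 : s - (s + r) = -r := by ring
        simpa [e1, add_sub_cancel_left] using this
      have hrpos : (0:ℝ) < -r := by linarith
      rw [div_le_iff₀ hrpos] at hsl
      nlinarith
    · simp [hr]
    · have := hdle r hr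
      rw [le_div_iff₀ hr] at this
      linarith

/-- The supporting-line estimate: from a subderivative of `t ↦ N (xs + t • w)` at `0`
we get a lower bound for `N` on a whole family of combinations. -/
lemma aux_claim {V : Type*} [AddCommGroup V] [Module ℝ V]
    (N : V → ℝ)
    (hhomog : ∀ (c : ℝ) (x : V), N (c • x) = |c| * N x)
    (htri : ∀ x y : V, N (x + y) ≤ N x + N y)
    (xs w : V) (d : ℝ)
    (hgs0 : 0 < N xs) (hd : |d| ≤ N w)
    (hsubd : ∀ β : ℝ, N xs + d * β ≤ N (xs + β • w)) :
    ∀ β : ℝ, N xs ≤ N ((1 - β * (d / N xs)) • xs + β • w) := by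
  intro β
  set gs := N xs with hgs
  set α := 1 - β * (d / gs) with hα
  have hαgs : α * gs = gs - β * d := by
    have hgsne : gs ≠ 0 := hgs0.ne'
    rw [hα, sub_mul, one_mul, mul_assoc, div_mul_cancel₀ d hgsne]
  rcases lt_or_ge 0 α with hpos | hneg
  · have hsplit : α • xs + β • w = α • (xs + (β / α) • w) := by
      rw [smul_add, smul_smul]
      congr 2
      field_simp
    rw [hsplit, hhomog, abs_of_pos hpos]
    have := hsubd (β / α)
    have h2 : α * (gs + d * (β / α)) ≤ α * N (xs + (β / α) • w) :=
      mul_le_mul_of_nonneg_left this hpos.le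
    have h3 : α * (gs + d * (β / α)) = α * gs + d * β := by
      field_simp
    rw [h3, hαgs] at h2
    linarith
  · have hβd : gs ≤ β * d := by
      have hgsne : gs ≠ 0 := hgs0.ne'
      have : 1 ≤ β * (d / gs) := by linarith [hα ▸ hneg]
      calc gs = 1 * gs := (one_mul gs).symm
        _ ≤ (β * (d / gs)) * gs := by
            exact mul_le_mul_of_nonneg_right this hgs0.le
        _ = β * d := by field_simp
    have htriangle : N (β • w) ≤ N (α • xs + β • w) + N ((-α) • xs) := by
      have heq : (α • xs + β • w) + (-α) • xs = β • w := by module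
      have h' := htri (α • xs + β • w) ((-α) • xs)
      rwa [heq] at h'
    rw [hhomog, hhomog] at htriangle
    have h1 : β * d ≤ |β| * N w := by
      calc β * d ≤ |β * d| := le_abs_self _
        _ = |β| * |d| := abs_mul β d
        _ ≤ |β| * N w := mul_le_mul_of_nonneg_left hd (abs_nonneg β)
    have h2 : |(-α)| = -α := by
      rw [abs_neg]; exact abs_of_nonpos hneg
    rw [h2] at htriangle
    nlinarith

set_option maxHeartbeats 2000000 in
lemma key_ineq {V : Type*} [AddCommGroup V] [Module ℝ V]
    (N₁ N₂ : V → ℝ)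
    (h₁nonneg : ∀ x : V, 0 ≤ N₁ x) (h₁def : ∀ x : V, N₁ x = 0 → x = 0)
    (h₁homog : ∀ (c : ℝ) (x : V), N₁ (c • x) = |c| * N₁ x)
    (h₁tri : ∀ x y : V, N₁ (x + y) ≤ N₁ x + N₁ y)
    (h₂nonneg : ∀ x : V, 0 ≤ N₂ x) (h₂def : ∀ x : V, N₂ x = 0 → x = 0)
    (h₂homog : ∀ (c : ℝ) (x : V), N₂ (c • x) = |c| * N₂ x)
    (hsame : ∀ x y : V, x ≠ 0 → y ≠ 0 → (NormalWith N₁ x y ↔ NormalWith N₂ x y))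
    (u v : V) (hind : ∀ a b : ℝ, a • u + b • v = 0 → a = 0 ∧ b = 0) :
    N₂ u * N₁ v ≤ N₂ v * N₁ u := by
  have hpos₁ : ∀ z : V, z ≠ 0 → 0 < N₁ z :=
    fun z hz => (h₁nonneg z).lt_of_ne (fun h => hz (h₁def z h.symm))
  have hpos₂ : ∀ z : V, z ≠ 0 → 0 < N₂ z :=
    fun z hz => (h₂nonneg z).lt_of_ne (fun h => hz (h₂def z h.symm))
  set w : V := v - u with hw
  set x : ℝ → V := fun t => u + t • w with hxdef
  -- basic algebra facts
  have hxst : ∀ s t : ℝ, x t = x s + (t - s) • w := by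
    intro s t; simp only [hxdef]; module
  have hx0 : ∀ t : ℝ, t ∈ Icc (0:ℝ) 1 → x t ≠ 0 := by
    intro t ht h
    have h2 : (1 - t) • u + t • v = 0 := by
      rw [← h]; simp only [hxdef, hw]; module
    obtain ⟨h3, h4⟩ := hind _ _ h2
    rw [h4] at h3; norm_num at h3
  have hxw : ∀ s a b : ℝ, a • x s + b • w = 0 → a = 0 ∧ b = 0 := by
    intro s a b h
    have h2 : (a - (a * s + b)) • u + (a * s + b) • v = 0 := by
      rw [← h]; simp only [hxdef, hw]; module
    obtain ⟨h3, h4⟩ := hind _ _ h2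
    have ha : a = 0 := by linarith
    refine ⟨ha, ?_⟩
    rw [ha] at h4; simpa using h4
  -- convexity and Lipschitz property of g₁
  have hlip₁ : ∀ a b : ℝ, N₁ (x a) ≤ N₁ (x b) + |a - b| * N₁ w := by
    intro a b
    rw [hxst b a]
    calc N₁ (x b + (a - b) • w) ≤ N₁ (x b) + N₁ ((a - b) • w) := h₁tri _ _
      _ = N₁ (x b) + |a - b| * N₁ w := by rw [h₁homog]
  have hcvx : ConvexOn ℝ Set.univ (fun t => N₁ (x t)) := by
    refine ⟨convex_univ, ?_⟩
    intro p _ q _ a b ha hb hab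
    have hxcomb : x (a * p + b * q) = a • x p + b • x q := by
      simp only [hxdef]
      rw [show a • (u + p • w) + b • (u + q • w) = (a + b) • u + (a * p + b * q) • w by module,
        hab, one_smul]
    simp only [smul_eq_mul]
    rw [hxcomb]
    calc N₁ (a • x p + b • x q) ≤ N₁ (a • x p) + N₁ (b • x q) := h₁tri _ _
      _ = a * N₁ (x p) + b * N₁ (x q) := by
          rw [h₁homog, h₁homog, abs_of_nonneg ha, abs_of_nonneg hb]
  -- the minimum of N₁ ∘ x on [0,1]
  have hcont : Continuous (fun t => N₁ (x t)) := by
    have hlw : LipschitzWith (Real.toNNReal (N₁ w)) (fun t => N₁ (x t)) := by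
      apply LipschitzWith.of_dist_le_mul
      intro a b
      rw [Real.dist_eq, Real.dist_eq]
      have hc : (Real.toNNReal (N₁ w) : ℝ) = N₁ w := Real.coe_toNNReal _ (h₁nonneg w)
      rw [hc, abs_sub_le_iff]
      have h1 := hlip₁ a b
      have h2 := hlip₁ b a
      rw [abs_sub_comm b a] at h2
      constructor <;> linarith
    exact hlw.continuous
  obtain ⟨t₀, ht₀, hminon⟩ := isCompact_Icc.exists_isMinOn (Set.nonempty_Icc.2 zero_le_one)
    hcont.continuousOn
  set m := N₁ (x t₀) with hm
  have hm0 : 0 < m := hpos₁ _ (hx0 t₀ ht₀)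
  have hmle : ∀ t, t ∈ Icc (0:ℝ) 1 → m ≤ N₁ (x t) := fun t ht => isMinOn_iff.1 hminon t ht
  -- the transfer step: a subderivative for N₁ produces a growth bound for N₂
  have step : ∀ s t d : ℝ, s ∈ Icc (0:ℝ) 1 → t ≠ s → |d| ≤ N₁ w →
      (∀ r : ℝ, N₁ (x s) + d * r ≤ N₁ (x (s + r))) →
      0 < 1 + (t - s) * (d / N₁ (x s)) →
      (1 + (t - s) * (d / N₁ (x s))) * N₂ (x s) ≤ N₂ (x t) := by
    intro s t d hs hts hdle hdsub hApos
    set A := 1 + (t - s) * (d / N₁ (x s)) with hA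
    have hgs : 0 < N₁ (x s) := hpos₁ _ (hx0 s hs)
    have hsub' : ∀ β : ℝ, N₁ (x s) + d * β ≤ N₁ (x s + β • w) := by
      intro β
      have h1 := hdsub β
      rwa [hxst s (s + β), add_sub_cancel_left] at h1
    have hclaim := aux_claim N₁ h₁homog h₁tri (x s) w d hgs hdle hsub'
    set y := x t - A • x s with hy
    have hxsy : ∀ r : ℝ, x s + r • y =
        (1 - (r * (t - s)) * (d / N₁ (x s))) • x s + (r * (t - s)) • w := by
      intro r
      rw [hy, hxst s t, hA]
      module
    have hn₁ : NormalWith N₁ (x s) y := by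
      intro r
      rw [hxsy r]
      exact hclaim (r * (t - s))
    have hxs0 : x s ≠ 0 := hx0 s hs
    have hy0 : y ≠ 0 := by
      intro h0
      have h1 : ((-(t - s)) * (d / N₁ (x s))) • x s + (t - s) • w = y := by
        rw [hy, hxst s t, hA]; module
      rw [h0] at h1
      have h2 := (hxw s _ _ h1).2
      exact hts (sub_eq_zero.1 h2)
    have hn₂ : NormalWith N₂ (x s) y := (hsame _ _ hxs0 hy0).1 hn₁
    have hr := hn₂ A⁻¹
    have hxA : x s + A⁻¹ • y = A⁻¹ • x t := by
      rw [hy, smul_sub, smul_smul, inv_mul_cancel₀ hApos.ne', one_smul]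
      abel
    rw [hxA, h₂homog, abs_of_pos (inv_pos.2 hApos)] at hr
    calc A * N₂ (x s) ≤ A * (A⁻¹ * N₂ (x t)) := mul_le_mul_of_nonneg_left hr hApos.le
      _ = N₂ (x t) := by field_simp
  set p := N₁ w / m with hp
  have hppos : 0 ≤ p := div_nonneg (h₁nonneg w) hm0.le
  have main : ∀ n : ℕ, 0 < n → 2 * p ≤ (n:ℝ) → p^2 ≤ (n:ℝ) →
      (1 - p/n)^2 * (1 - p^2/n) * (N₂ u * N₁ v) ≤ N₂ v * N₁ u := by
    intro n hn h2p hp2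
    have hnR : (0:ℝ) < n := Nat.cast_pos.2 hn
    set δ := (n:ℝ)⁻¹ with hδ
    have hδ0 : 0 < δ := inv_pos.2 hnR
    obtain ⟨T, hT⟩ : ∃ T : ℕ → ℝ, T = fun j : ℕ => (j:ℝ) / n := ⟨_, rfl⟩
    have hTmem : ∀ j : ℕ, j ≤ n → T j ∈ Icc (0:ℝ) 1 := by
      intro j hj
      simp only [hT, mem_Icc]
      constructor
      · exact div_nonneg (Nat.cast_nonneg j) hnR.le
      · rw [div_le_one hnR]; exact_mod_cast hj
    have hTsucc : ∀ j : ℕ, T (j+1) - T j = δ := by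
      intro j
      simp only [hT, hδ]
      push_cast
      field_simp
      ring
    have hsubs : ∀ j : ℕ, ∃ dd : ℝ, |dd| ≤ N₁ w ∧
        ∀ r : ℝ, N₁ (x (T j)) + dd * r ≤ N₁ (x (T j + r)) := by
      intro j
      obtain ⟨dd, h1, h2⟩ := aux_subderiv (fun t => N₁ (x t)) hcvx (N₁ w) hlip₁ (T j)
      exact ⟨dd, h1, h2⟩
    choose d hdle hdsub using hsubs
    obtain ⟨E, hE⟩ : ∃ E : ℕ → ℝ, E = fun j => d j / N₁ (x (T j)) := ⟨_, rfl⟩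
    have hgT : ∀ j : ℕ, j ≤ n → 0 < N₁ (x (T j)) :=
      fun j hj => hpos₁ _ (hx0 _ (hTmem j hj))
    have hEbound : ∀ j : ℕ, j ≤ n → |E j| ≤ p := by
      intro j hj
      rw [hE, hp]
      simp only
      rw [abs_div, abs_of_pos (hgT j hj)]
      exact div_le_div₀ (h₁nonneg w) (hdle j) hm0 (hmle _ (hTmem j hj))
    have hδp : δ * p ≤ 1/2 := by
      rw [hδ]
      rw [inv_mul_le_iff₀ hnR]
      linarith
    have hδE : ∀ j : ℕ, j ≤ n → |δ * E j| ≤ δ * p := by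
      intro j hj
      rw [abs_mul, abs_of_pos hδ0]
      exact mul_le_mul_of_nonneg_left (hEbound j hj) hδ0.le
    obtain ⟨A, hAd⟩ : ∃ A : ℕ → ℝ, A = fun j => 1 + δ * E j := ⟨_, rfl⟩
    obtain ⟨B, hBd⟩ : ∃ B : ℕ → ℝ, B = fun j => 1 - δ * E j := ⟨_, rfl⟩
    have hA2 : ∀ j : ℕ, j ≤ n → (1:ℝ)/2 ≤ A j := by
      intro j hj
      have := abs_le.1 (hδE j hj)
      rw [hAd]
      linarith
    have hB2 : ∀ j : ℕ, j ≤ n → (1:ℝ)/2 ≤ B j := by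
      intro j hj
      have := abs_le.1 (hδE j hj)
      rw [hBd]
      linarith
    set K := 1 - (δ*p)^2 with hK
    have hK0 : (0:ℝ) ≤ K := by
      rw [hK]
      nlinarith [hδp, mul_nonneg hδ0.le hppos]
    have hAB : ∀ j : ℕ, j ≤ n → K ≤ A j * B j := by
      intro j hj
      have h1 := abs_le.1 (hδE j hj)
      have h2 : (δ * E j)^2 ≤ (δ*p)^2 := sq_le_sq' h1.1 h1.2
      have h3 : A j * B j = 1 - (δ * E j)^2 := by rw [hAd, hBd]; ring
      rw [h3, hK]; linarith
    have stepA : ∀ j : ℕ, j + 1 ≤ n → A j * N₂ (x (T j)) ≤ N₂ (x (T (j+1))) := by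
      intro j hj
      have hAj : A j = 1 + (T (j+1) - T j) * (d j / N₁ (x (T j))) := by
        rw [hTsucc j, hAd, hE]
      have hne : T (j+1) ≠ T j := by
        intro hh
        have := hTsucc j
        rw [hh] at this
        simp at this
        linarith [hδ0, this]
      have hjle : j ≤ n := Nat.le_of_succ_le hj
      have hpos : 0 < 1 + (T (j+1) - T j) * (d j / N₁ (x (T j))) := by
        rw [← hAj]
        have := hA2 j hjle
        linarith
      have := step (T j) (T (j+1)) (d j) (hTmem j hjle) hne (hdle j) (hdsub j) hpos
      rw [hAj]
      exact this
    have stepB : ∀ j : ℕ, j + 1 ≤ n → B (j+1) * N₁ (x (T (j+1))) ≤ N₁ (x (T j)) := by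
      intro j hj
      have h1 := hdsub (j+1) (-δ)
      have hTj : T (j+1) + (-δ) = T j := by
        have := hTsucc j; linarith
      rw [hTj] at h1
      have h2 : B (j+1) * N₁ (x (T (j+1))) = N₁ (x (T (j+1))) + d (j+1) * (-δ) := by
        rw [hBd, hE]
        simp only
        field_simp [(hgT (j+1) hj).ne']
        ring
      rw [h2]
      exact h1
    have inv : ∀ j : ℕ, j + 1 ≤ n →
        A 0 * K^j * B (j+1) * (N₂ (x (T 0)) * N₁ (x (T (j+1)))) ≤
          N₂ (x (T (j+1))) * N₁ (x (T 0)) := by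
      intro j
      induction j with
      | zero =>
        intro h1
        have sA := stepA 0 h1
        have sB := stepB 0 h1
        have h2 : (A 0 * N₂ (x (T 0))) * (B 1 * N₁ (x (T 1))) ≤
            N₂ (x (T 1)) * N₁ (x (T 0)) := by
          apply mul_le_mul sA sB (mul_nonneg ?_ (h₁nonneg _)) (h₂nonneg _)
          linarith [hB2 1 h1]
        calc A 0 * K^0 * B 1 * (N₂ (x (T 0)) * N₁ (x (T 1)))
            = (A 0 * N₂ (x (T 0))) * (B 1 * N₁ (x (T 1))) := by ring
          _ ≤ _ := h2
      | succ j ih =>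
        intro hj2
        have hj1 : j + 1 ≤ n := by omega
        have H1 := ih hj1
        have H2 := stepA (j+1) hj2
        have H3 := stepB (j+1) hj2
        have hA0n : 0 ≤ A 0 := by linarith [hA2 0 (by omega)]
        have hAj1 : 0 ≤ A (j+1) := by linarith [hA2 (j+1) (by omega)]
        have hBj1 : 0 ≤ B (j+1) := by linarith [hB2 (j+1) (by omega)]
        have hBj2 : 0 ≤ B (j+2) := by linarith [hB2 (j+2) (by omega)]
        have hKj : (0:ℝ) ≤ K ^ j := pow_nonneg hK0 j
        have hg2T0 : 0 ≤ N₂ (x (T 0)) := h₂nonneg _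
        have hg1' : 0 ≤ N₁ (x (T (j+2))) := h₁nonneg _
        have hABj : K ≤ A (j+1) * B (j+1) := hAB (j+1) (by omega)
        calc A 0 * K^(j+1) * B (j+2) * (N₂ (x (T 0)) * N₁ (x (T (j+2))))
            ≤ A 0 * (K^j * (A (j+1) * B (j+1))) * B (j+2) *
              (N₂ (x (T 0)) * N₁ (x (T (j+2)))) := by
              apply mul_le_mul_of_nonneg_right ?_ (mul_nonneg hg2T0 hg1')
              apply mul_le_mul_of_nonneg_right ?_ hBj2
              apply mul_le_mul_of_nonneg_left ?_ hA0n
              rw [pow_succ]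
              calc K ^ j * K ≤ K ^ j * (A (j+1) * B (j+1)) :=
                    mul_le_mul_of_nonneg_left hABj hKj
                _ = K ^ j * (A (j+1) * B (j+1)) := rfl
          _ = A (j+1) * ((A 0 * K^j * B (j+1)) *
              (N₂ (x (T 0)) * (B (j+2) * N₁ (x (T (j+2)))))) := by ring
          _ ≤ A (j+1) * ((A 0 * K^j * B (j+1)) *
              (N₂ (x (T 0)) * N₁ (x (T (j+1))))) := by
              apply mul_le_mul_of_nonneg_left ?_ hAj1
              apply mul_le_mul_of_nonneg_left ?_
                (mul_nonneg (mul_nonneg hA0n hKj) hBj1)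
              exact mul_le_mul_of_nonneg_left H3 hg2T0
          _ ≤ A (j+1) * (N₂ (x (T (j+1))) * N₁ (x (T 0))) :=
              mul_le_mul_of_nonneg_left H1 hAj1
          _ = (A (j+1) * N₂ (x (T (j+1)))) * N₁ (x (T 0)) := by ring
          _ ≤ N₂ (x (T (j+2))) * N₁ (x (T 0)) :=
              mul_le_mul_of_nonneg_right H2 (h₁nonneg _)
    -- finale of main
    have hn1 : (n-1) + 1 = n := by omega
    have hfin := inv (n-1) (by omega)
    rw [hn1] at hfin
    have hT0 : T 0 = 0 := by simp [hT]
    have hTn : T n = 1 := by simp only [hT]; field_simp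
    have hx0u : x 0 = u := by simp only [hxdef]; module
    have hx1v : x 1 = v := by simp only [hxdef]; rw [hw]; module
    rw [hT0, hTn, hx0u, hx1v] at hfin
    have hpn : p/(n:ℝ) = δ*p := by rw [hδ]; ring
    have hq0 : 0 ≤ 1 - p/(n:ℝ) := by rw [hpn]; linarith
    have hqA : 1 - p/(n:ℝ) ≤ A 0 := by
      have h1 := (abs_le.1 (hδE 0 (by omega))).1
      rw [hAd]; rw [hpn]; simp only; linarith
    have hqB : 1 - p/(n:ℝ) ≤ B n := by
      have h1 := (abs_le.1 (hδE n (le_refl n))).2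
      rw [hBd]; rw [hpn]; simp only; linarith
    have hKpow : 1 - p^2/(n:ℝ) ≤ K^(n-1) := by
      have hb := one_add_mul_le_pow (a := -((δ*p)^2))
        (by nlinarith [hδp, mul_nonneg hδ0.le hppos]) (n-1)
      have he : (1 + -((δ*p)^2)) = K := by rw [hK]; ring
      rw [he] at hb
      have h1 : ((n-1:ℕ):ℝ) * (δ*p)^2 ≤ p^2/(n:ℝ) := by
        rw [hδ, div_eq_mul_inv]
        have e1 : ((n-1:ℕ):ℝ) * (((n:ℝ))⁻¹*p)^2 =
            (((n-1:ℕ):ℝ) * ((n:ℝ))⁻¹) * (p^2 * ((n:ℝ))⁻¹) := by ring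
        rw [e1]
        have e2 : ((n-1:ℕ):ℝ) * ((n:ℝ))⁻¹ ≤ 1 := by
          rw [← div_eq_mul_inv, div_le_one hnR]
          exact_mod_cast Nat.sub_le n 1
        have e3 : 0 ≤ p^2 * ((n:ℝ))⁻¹ := by positivity
        calc (((n-1:ℕ):ℝ) * ((n:ℝ))⁻¹) * (p^2 * ((n:ℝ))⁻¹)
            ≤ 1 * (p^2 * ((n:ℝ))⁻¹) := mul_le_mul_of_nonneg_right e2 e3
          _ = p^2 * ((n:ℝ))⁻¹ := one_mul _
      linarith [hb, h1]
    have hr0 : 0 ≤ 1 - p^2/(n:ℝ) := by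
      rw [sub_nonneg, div_le_one hnR]; exact hp2
    have hA0' : 0 ≤ A 0 := le_trans hq0 hqA
    have hfinal : (1 - p/(n:ℝ))^2 * (1 - p^2/(n:ℝ)) ≤ A 0 * K^(n-1) * B n := by
      have h1 : (1-p/(n:ℝ)) * (1-p/(n:ℝ)) ≤ A 0 * B n := mul_le_mul hqA hqB hq0 hA0'
      have h2 : ((1-p/(n:ℝ))*(1-p/(n:ℝ))) * (1 - p^2/(n:ℝ)) ≤ (A 0 * B n) * K^(n-1) :=
        mul_le_mul h1 hKpow hr0 (mul_nonneg hA0' (le_trans hq0 hqB))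
      calc (1-p/(n:ℝ))^2 * (1-p^2/(n:ℝ)) = ((1-p/(n:ℝ))*(1-p/(n:ℝ)))*(1-p^2/(n:ℝ)) := by ring
        _ ≤ (A 0 * B n) * K^(n-1) := h2
        _ = A 0 * K^(n-1) * B n := by ring
    calc (1 - p/(n:ℝ))^2 * (1 - p^2/(n:ℝ)) * (N₂ u * N₁ v)
        ≤ (A 0 * K^(n-1) * B n) * (N₂ u * N₁ v) :=
          mul_le_mul_of_nonneg_right hfinal (mul_nonneg (h₂nonneg u) (h₁nonneg v))
      _ ≤ N₂ v * N₁ u := hfin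
  have l1 : Tendsto (fun nn : ℕ => p / (nn:ℝ)) atTop (𝓝 0) :=
    tendsto_const_div_atTop_nhds_zero_nat p
  have l2 : Tendsto (fun nn : ℕ => p^2 / (nn:ℝ)) atTop (𝓝 0) :=
    tendsto_const_div_atTop_nhds_zero_nat (p^2)
  have hC : Tendsto (fun nn : ℕ => (1 - p/(nn:ℝ))^2 * (1 - p^2/(nn:ℝ)) * (N₂ u * N₁ v))
      atTop (𝓝 (N₂ u * N₁ v)) := by
    have l3 : Tendsto (fun nn : ℕ => (1 - p/(nn:ℝ))^2 * (1 - p^2/(nn:ℝ)) * (N₂ u * N₁ v)) atTop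
        (𝓝 ((1 - 0)^2 * (1 - 0) * (N₂ u * N₁ v))) := by
      refine Tendsto.mul (Tendsto.mul ?_ ?_) tendsto_const_nhds
      · exact (tendsto_const_nhds.sub l1).pow 2
      · exact tendsto_const_nhds.sub l2
    have e : ((1:ℝ) - 0)^2 * (1 - 0) * (N₂ u * N₁ v) = N₂ u * N₁ v := by ring
    rw [e] at l3
    exact l3
  refine le_of_tendsto hC ?_
  refine Filter.eventually_atTop.2 ⟨⌈2*p⌉₊ + ⌈p^2⌉₊ + 1, ?_⟩
  intro nn hnn
  apply main nn
  · omega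
  · calc 2*p ≤ (⌈2*p⌉₊:ℝ) := Nat.le_ceil _
      _ ≤ (nn:ℝ) := by exact_mod_cast (by omega : ⌈2*p⌉₊ ≤ nn)
  · calc p^2 ≤ (⌈p^2⌉₊:ℝ) := Nat.le_ceil _
      _ ≤ (nn:ℝ) := by exact_mod_cast (by omega : ⌈p^2⌉₊ ≤ nn)


/-- If two norms on a two-dimensional real vector space induce the same Birkhoff
normality relation, then they are proportional. -/
theorem stmt7 {V : Type*} [AddCommGroup V] [Module ℝ V]
    (hdim : Module.finrank ℝ V = 2)
    (N₁ N₂ : V → ℝ)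
    (h₁nonneg : ∀ x : V, 0 ≤ N₁ x) (h₁def : ∀ x : V, N₁ x = 0 → x = 0)
    (h₁homog : ∀ (c : ℝ) (x : V), N₁ (c • x) = |c| * N₁ x)
    (h₁tri : ∀ x y : V, N₁ (x + y) ≤ N₁ x + N₁ y)
    (h₂nonneg : ∀ x : V, 0 ≤ N₂ x) (h₂def : ∀ x : V, N₂ x = 0 → x = 0)
    (h₂homog : ∀ (c : ℝ) (x : V), N₂ (c • x) = |c| * N₂ x)
    (h₂tri : ∀ x y : V, N₂ (x + y) ≤ N₂ x + N₂ y)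
    (hsame : ∀ x y : V, x ≠ 0 → y ≠ 0 → (NormalWith N₁ x y ↔ NormalWith N₂ x y)) :
    ∃ c : ℝ, 0 < c ∧ ∀ x : V, N₂ x = c * N₁ x := by
  have hpos₁ : ∀ z : V, z ≠ 0 → 0 < N₁ z :=
    fun z hz => (h₁nonneg z).lt_of_ne (fun h => hz (h₁def z h.symm))
  have hpos₂ : ∀ z : V, z ≠ 0 → 0 < N₂ z :=
    fun z hz => (h₂nonneg z).lt_of_ne (fun h => hz (h₂def z h.symm))
  have hzero₁ : N₁ 0 = 0 := by
    have := h₁homog 0 0; simpa using this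
  have hzero₂ : N₂ 0 = 0 := by
    have := h₂homog 0 0; simpa using this
  have hnt : Nontrivial V := by
    by_contra hcon
    rw [not_nontrivial_iff_subsingleton] at hcon
    haveI := hcon
    have : Module.finrank ℝ V = 0 := Module.finrank_zero_of_subsingleton
    omega
  obtain ⟨e, he⟩ := exists_ne (0 : V)
  have hN₁e : N₁ e ≠ 0 := (hpos₁ e he).ne'
  refine ⟨N₂ e / N₁ e, div_pos (hpos₂ e he) (hpos₁ e he), ?_⟩
  intro z
  by_cases hz : z = 0
  · subst hz; rw [hzero₁, hzero₂, mul_zero]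
  by_cases hdep : ∃ l : ℝ, z = l • e
  · obtain ⟨l, rfl⟩ := hdep
    rw [h₁homog, h₂homog]
    field_simp
  · have hind : ∀ a b : ℝ, a • e + b • z = 0 → a = 0 ∧ b = 0 := by
      intro a b hab
      by_cases hb : b = 0
      · subst hb
        have h1 : a • e = 0 := by simpa using hab
        rcases smul_eq_zero.1 h1 with h | h
        · exact ⟨h, rfl⟩
        · exact absurd h he
      · exfalso
        apply hdep
        refine ⟨-a/b, ?_⟩
        have h1 : b • z = -(a • e) := by
          rw [eq_neg_iff_add_eq_zero, add_comm]; exact hab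
        calc z = b⁻¹ • (b • z) := by rw [smul_smul, inv_mul_cancel₀ hb, one_smul]
          _ = b⁻¹ • (-(a • e)) := by rw [h1]
          _ = (-a/b) • e := by
              rw [smul_neg, smul_smul, ← neg_smul]
              congr 1
              field_simp
    have hind' : ∀ a b : ℝ, a • z + b • e = 0 → a = 0 ∧ b = 0 := by
      intro a b hab
      have := hind b a (by rw [add_comm]; exact hab)
      exact ⟨this.2, this.1⟩
    have h1 := key_ineq N₁ N₂ h₁nonneg h₁def h₁homog h₁tri h₂nonneg h₂def h₂homog hsame
      e z hind
    have h2 := key_ineq N₁ N₂ h₁nonneg h₁def h₁homog h₁tri h₂nonneg h₂def h₂homog hsame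
      z e hind'
    have heq : N₂ e * N₁ z = N₂ z * N₁ e := le_antisymm h1 h2
    rw [div_mul_eq_mul_div, eq_div_iff hN₁e]
    linarith [heq]
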